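/- Define d_{n,k} = Σ_{i=2k}^{n} (n-i+1)·C(n-k+1, i-2k). Then for all positive integers n, k with n ≥ 2k+1: (n-2k+1)·d_{n+1,k} = -2(n-k+1)·d_{n-1,k} + (3n-5k+4)·d_{n,k}. -/

import Mathlib

open Finset

/-- `d n k = Σ_{i=2k}^{n} (n-i+1)·C(n-k+1, i-2k)`. -/
def d (n k : ℕ) : ℕ :=
  ∑ i ∈ Finset.Icc (2 * k) n, (n - i + 1) * Nat.choose (n - k + 1) (i - 2 * k)

/-- partial sum of binomial coefficients, up to `m` inclusive. -/
def Tz (N m : ℕ) : ℤ := ∑ j ∈ Finset.range (m + 1), (Nat.choose N j : ℤ)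

/-- weighted sum `Σ_{j<m} (m-j) C(M,j)`. -/
def gz (m M : ℕ) : ℤ := ∑ j ∈ Finset.range m, ((m : ℤ) - j) * (Nat.choose M j : ℤ)

lemma Tz_pascal (N m : ℕ) : Tz (N + 1) (m + 1) = Tz N (m + 1) + Tz N m := by
  unfold Tz
  rw [Finset.sum_range_succ' _ (m + 1), Finset.sum_range_succ' (fun j => (Nat.choose N j : ℤ)) (m + 1)]
  simp only [Nat.choose_succ_succ, Nat.cast_add, Nat.choose_zero_right]
  rw [Finset.sum_add_distrib]
  push_cast
  ring

lemma gz_step (m M : ℕ) : gz (m + 1) M = gz m M + Tz M m := by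
  unfold gz Tz
  calc ∑ j ∈ Finset.range (m + 1), (((m + 1 : ℕ) : ℤ) - j) * (Nat.choose M j : ℤ)
      = ∑ j ∈ Finset.range (m + 1), ((((m : ℤ) - j) * (Nat.choose M j : ℤ)) + (Nat.choose M j : ℤ)) := by
        refine Finset.sum_congr rfl ?_
        intro j _; push_cast; ring
    _ = (∑ j ∈ Finset.range (m + 1), ((m : ℤ) - j) * (Nat.choose M j : ℤ))
        + ∑ j ∈ Finset.range (m + 1), (Nat.choose M j : ℤ) := Finset.sum_add_distrib
    _ = (∑ j ∈ Finset.range m, ((m : ℤ) - j) * (Nat.choose M j : ℤ))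
        + ∑ j ∈ Finset.range (m + 1), (Nat.choose M j : ℤ) := by
        rw [Finset.sum_range_succ]; simp

lemma gz_pascal (m M : ℕ) : gz (m + 1) (M + 1) = gz (m + 1) M + gz m M := by
  induction m with
  | zero => simp [gz]
  | succ m ih =>
      have h1 : gz (m + 2) (M + 1) = gz (m + 1) (M + 1) + Tz (M + 1) (m + 1) := gz_step (m + 1) (M + 1)
      have h2 : Tz (M + 1) (m + 1) = Tz M (m + 1) + Tz M m := Tz_pascal M m
      have h3 : gz (m + 2) M = gz (m + 1) M + Tz M (m + 1) := gz_step (m + 1) M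
      have h4 : gz (m + 1) M = gz m M + Tz M m := gz_step m M
      linarith [ih, h1, h2, h3, h4]

lemma key (N m : ℕ) :
    ((m : ℤ) + 1) * Tz (N + 1) (m + 1) = ((N : ℤ) + 2) * Tz N m + 2 * gz m N := by
  induction m with
  | zero =>
      simp [Tz, gz, Finset.sum_range_succ]
      ring
  | succ m ih =>
      have habs : ((m : ℤ) + 2) * (Nat.choose (N + 1) (m + 2) : ℤ)
          = ((N : ℤ) + 1) * (Nat.choose N (m + 1) : ℤ) := by
        have h2 : (N + 1) * Nat.choose N (m + 1) = Nat.choose (N + 1) (m + 2) * (m + 2) :=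
          Nat.add_one_mul_choose_eq N (m + 1)
        have h3 := congrArg (Nat.cast : ℕ → ℤ) h2
        push_cast at h3
        linarith
      have hT1 : Tz (N + 1) (m + 2) = Tz (N + 1) (m + 1) + (Nat.choose (N + 1) (m + 2) : ℤ) := by
        unfold Tz; rw [Finset.sum_range_succ]
      have hT0 : Tz N (m + 1) = Tz N m + (Nat.choose N (m + 1) : ℤ) := by
        unfold Tz; rw [Finset.sum_range_succ]
      have hTp : Tz (N + 1) (m + 1) = Tz N (m + 1) + Tz N m := Tz_pascal N m
      have hg : gz (m + 1) N = gz m N + Tz N m := gz_step m N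
      have goal2 : ((m : ℤ) + 1 + 1) * Tz (N + 1) (m + 1 + 1)
          = ((N : ℤ) + 2) * Tz N (m + 1) + 2 * gz (m + 1) N := by
        rw [hT1, hg]
        linear_combination ih + habs + hTp - ((N : ℤ) + 1) * hT0
      exact_mod_cast goal2

lemma main_id (m N : ℕ) :
    ((m : ℤ) + 2) * gz (m + 3) (N + 2) + 2 * ((N : ℤ) + 1) * gz (m + 1) N
      = (2 * (m : ℤ) + (N : ℤ) + 6) * gz (m + 2) (N + 1) := by
  have h1 : gz (m + 3) (N + 2) = gz (m + 3) (N + 1) + gz (m + 2) (N + 1) := gz_pascal (m + 2) (N + 1)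
  have h2 : gz (m + 3) (N + 1) = gz (m + 2) (N + 1) + Tz (N + 1) (m + 2) := gz_step (m + 2) (N + 1)
  have h3 : gz (m + 2) (N + 1) = gz (m + 2) N + gz (m + 1) N := gz_pascal (m + 1) N
  have h4 : gz (m + 2) N = gz (m + 1) N + Tz N (m + 1) := gz_step (m + 1) N
  have h5 : ((m : ℤ) + 1 + 1) * Tz (N + 1) (m + 1 + 1)
      = ((N : ℤ) + 2) * Tz N (m + 1) + 2 * gz (m + 1) N := key N (m + 1)
  linear_combination ((m : ℤ) + 2) * h1 + ((m : ℤ) + 2) * h2 + h5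
    - ((N : ℤ) + 2) * h3 - ((N : ℤ) + 2) * h4

lemma d_eq_gz (n k : ℕ) (h : 2 * k ≤ n) :
    (d n k : ℤ) = gz (n - 2 * k + 1) (n - k + 1) := by
  unfold d gz
  rw [← Finset.Ico_add_one_right_eq_Icc, Finset.sum_Ico_eq_sum_range]
  have hlen : n + 1 - 2 * k = n - 2 * k + 1 := by omega
  rw [hlen]
  push_cast
  refine Finset.sum_congr rfl ?_
  intro j hj
  rw [Finset.mem_range] at hj
  have h1 : 2 * k + j - 2 * k = j := by omega
  rw [h1]
  have h2 : ((n - (2 * k + j) + 1 : ℕ) : ℤ) = ((n - 2 * k + 1 : ℕ) : ℤ) - (j : ℤ) := by omega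
  push_cast at h2 ⊢
  rw [h2]

theorem stmt6 (n k : ℕ) (hn : 1 ≤ n) (hk : 1 ≤ k) (h : 2 * k + 1 ≤ n) :
    ((n : ℤ) - 2 * k + 1) * (d (n + 1) k : ℤ) =
      -2 * ((n : ℤ) - k + 1) * (d (n - 1) k : ℤ) +
        (3 * (n : ℤ) - 5 * k + 4) * (d n k : ℤ) := by
  set m := n - 2 * k - 1 with hm
  set N := n - k with hN
  have e1 : (d (n + 1) k : ℤ) = gz (m + 3) (N + 2) := by
    rw [d_eq_gz (n + 1) k (by omega)]
    congr 1 <;> omega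
  have e2 : (d (n - 1) k : ℤ) = gz (m + 1) N := by
    rw [d_eq_gz (n - 1) k (by omega)]
    congr 1 <;> omega
  have e3 : (d n k : ℤ) = gz (m + 2) (N + 1) := by
    rw [d_eq_gz n k (by omega)]
    congr 1 <;> omega
  rw [e1, e2, e3]
  have c1 : ((n : ℤ) - 2 * k + 1) = ((m : ℤ) + 2) := by omega
  have c2 : ((n : ℤ) - k + 1) = ((N : ℤ) + 1) := by omega
  have c3 : (3 * (n : ℤ) - 5 * k + 4) = (2 * (m : ℤ) + (N : ℤ) + 6) := by omega
  rw [c1, c2, c3]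
  linear_combination main_id m N
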